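/- Let V be a finite-dimensional commutative algebra over a field k with basis {x_i}_{i∈I} and structure constants N_{ij}^k (so x_i x_j = Σ_k N_{ij}^k x_k). Define the convolution product by x_i * x_j = (δ_{ij}/d_i)·x_i for given nonzero scalars d_i. Suppose s: V → V is the linear map s(x_i) = Σ_j s_{ij} x_j for a matrix (s_{ij}) satisfying s(x y) = s(x) * s(y) for all x,y, and s is invertible with s_{0l} ≠ 0 for all l (where 0 ∈ I is the identity basis index, x_0 = 1). Then N_{ij}^k = Σ_l s_{jl} s_{il} (s⁻¹)_{lk} / s_{0l}. -/
import Mathlib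


open Finset

/-- Verlinde formula in its familiar matrix form, for a commutative
fusion-type algebra whose structure constants are diagonalized by an invertible
matrix `s` intertwining the fusion product with the convolution product. -/
theorem stmt0 {𝕜 : Type*} [Field 𝕜] {I : Type*} [Fintype I] [DecidableEq I]
    (z : I)                                  -- the identity basis index `0`
    (d : I → 𝕜) (hd : ∀ i, d i ≠ 0)
    (N : I → I → I → 𝕜)                      -- fusion structure constants
    (s sInv : Matrix I I 𝕜)
    -- (V, fusion) is a commutative algebra with unit x_z = 1 :
    (hcomm : ∀ a b c, N a b c = N b a c)
    (hassoc : ∀ a b c e, ∑ m, N a b m * N m c e = ∑ m, N b c m * N a m e)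
    (hunitl : ∀ b c, N z b c = if b = c then 1 else 0)
    (hunitr : ∀ a c, N a z c = if a = c then 1 else 0)
    -- s(x y) = s(x) * s(y), with s(x)_j = ∑_i x_i s_{ij} and (u * v)_i = u_i v_i / d_i :
    (hVerlinde : ∀ x y : I → 𝕜, ∀ j,
      ∑ i, (∑ a, ∑ b, x a * y b * N a b i) * s i j
        = (∑ i, x i * s i j) * (∑ i, y i * s i j) / d j)
    -- s is invertible :
    (hInv₁ : s * sInv = 1) (hInv₂ : sInv * s = 1)
    (h0 : ∀ l, s z l ≠ 0) :
    ∀ i j k, N i j k = ∑ l, s j l * s i l * sInv l k / s z l := by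
  -- Specialize hVerlinde to delta functions:
  have E1 : ∀ i j l, ∑ m, N i j m * s m l = s i l * s j l / d l := by
    intro i j l
    have := hVerlinde (fun a => if a = i then 1 else 0)
      (fun b => if b = j then 1 else 0) l
    simpa [Finset.sum_ite_eq', ite_mul, mul_ite] using this
  -- d l = s z l :
  have hdz : ∀ l, d l = s z l := by
    intro l
    have h := E1 z z l
    have h2 : ∑ m, N z z m * s m l = s z l := by
      simp [hunitl, ite_mul]
    rw [h2] at h
    rw [eq_div_iff (hd l)] at h
    exact mul_left_cancel₀ (h0 l) h
  intro i j k
  have key : ∀ l, ∑ m, N i j m * s m l = s i l * s j l / s z l := by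
    intro l; rw [← hdz l]; exact E1 i j l
  have hSI : ∑ l, (∑ m, N i j m * s m l) * sInv l k = N i j k := by
    simp_rw [Finset.sum_mul]
    rw [Finset.sum_comm]
    have h : ∀ m, ∑ l, N i j m * s m l * sInv l k = N i j m * (s * sInv) m k := by
      intro m; simp [Matrix.mul_apply, Finset.mul_sum, mul_assoc]
    simp_rw [h, hInv₁, Matrix.one_apply, mul_ite, mul_one, mul_zero,
      Finset.sum_ite_eq', Finset.mem_univ, if_true]
  calc N i j k = ∑ l, (s i l * s j l / s z l) * sInv l k := by
        rw [← hSI]; exact Finset.sum_congr rfl fun l _ => by rw [key]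
    _ = ∑ l, s j l * s i l * sInv l k / s z l :=
        Finset.sum_congr rfl fun l _ => by ring
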